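/- Let G : A^A × A^A → A be a total bisequential function. Then there exists φ_G ∈ A^A such that for all α, β ∈ A^A: φ_G α is defined (in the application of K₂(A)) and φ(φ_G α, β) = G(α, β). -/

import Mathlib

open Classical

noncomputable section

namespace OostenK2

universe u

/-! ### Finite partial functions -/

/-- Finite partial functions `A ⇀ A`, as finite functional graphs,
ordered by inclusion of graphs. -/
abbrev FPF (A : Type u) : Type u :=
  {p : Set (A × A) // (∀ ⦃a b b'⦄, (a, b) ∈ p → (a, b') ∈ p → b = b') ∧ p.Finite}

variable {A : Type u}

/-- The domain of a finite partial function. -/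
def FPF.dom (p : FPF A) : Set A := Prod.fst '' p.val

/-- The empty finite partial function (the root of sequential trees). -/
def FPF.empty (A : Type u) : FPF A :=
  ⟨∅, fun _ _ _ h => absurd h (Set.notMem_empty _), Set.finite_empty⟩

/-- A total function `α` extends the finite partial function `p`. -/
def agrees (α : A → A) (p : FPF A) : Prop := ∀ ⦃a b⦄, (a, b) ∈ p.val → α a = b

/-- A partial function `β` extends the finite partial function `p`. -/
def agreesP (β : A → Option A) (p : FPF A) : Prop :=
  ∀ ⦃a b⦄, (a, b) ∈ p.val → β a = some b

/-- Two finite partial functions are compatible if their union is a function. -/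
def compatFPF (s t : FPF A) : Prop :=
  ∀ ⦃a b b'⦄, (a, b) ∈ s.val → (a, b') ∈ t.val → b = b'

/-! ### Trees -/

section Trees

variable {X : Type*} [PartialOrder X]

/-- A leaf of `T`: an element of `T` with no strict extension in `T`. -/
def IsLeaf (T : Set X) (p : X) : Prop := p ∈ T ∧ ¬∃ q ∈ T, p < q

/-- `q` is an immediate successor of `p` in `T`. -/
def ImmSucc (T : Set X) (p q : X) : Prop :=
  q ∈ T ∧ p < q ∧ ¬∃ t ∈ T, p < t ∧ t < q

/-- `T` is a tree with root `root`: the root belongs to `T`, lies below every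
element, and the predecessors of any element form a chain. -/
def IsTreeOn (root : X) (T : Set X) : Prop :=
  root ∈ T ∧ (∀ p ∈ T, root ≤ p) ∧ ∀ p ∈ T, IsChain (· ≤ ·) {t | t ∈ T ∧ t ≤ p}

/-- A tree is well-founded iff it has no infinite strictly increasing path. -/
def WellFoundedTree (T : Set X) : Prop :=
  ¬∃ f : ℕ → X, (∀ n, f n ∈ T) ∧ StrictMono f

end Trees

/-- A sequential tree: a tree of finite partial functions, rooted at the empty
function, in which all immediate successors of a non-leaf `p` have domain
`dom p ∪ {a}` for a single `a ∉ dom p`. -/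
def IsSeqTree (T : Set (FPF A)) : Prop :=
  IsTreeOn (FPF.empty A) T ∧
  ∀ p ∈ T, ¬IsLeaf T p →
    ∃ a ∉ FPF.dom p, ∀ q, ImmSucc T p q → FPF.dom q = insert a (FPF.dom p)

/-- A total sequential tree: the immediate successors of a non-leaf `p` are
*all* extensions of `p` with domain `dom p ∪ {a}`. -/
def IsTotalSeqTree (T : Set (FPF A)) : Prop :=
  IsTreeOn (FPF.empty A) T ∧
  ∀ p ∈ T, ¬IsLeaf T p →
    ∃ a ∉ FPF.dom p,
      ∀ q : FPF A, ImmSucc T p q ↔ p < q ∧ FPF.dom q = insert a (FPF.dom p)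

/-- `Φ` (as a relation `(A → A) → A → Prop`) is a partial sequential function:
`Φ α = b` iff the path of `α` through some total sequential tree `T` ends in a
leaf `v` with `F v = b`. -/
def SeqRel (Φ : (A → A) → A → Prop) : Prop :=
  ∃ (T : Set (FPF A)) (F : FPF A → A), IsTotalSeqTree T ∧
    ∀ α b, Φ α b ↔ ∃ v, IsLeaf T v ∧ agrees α v ∧ F v = b

/-- A total bisequential tree: pairs of finite partial functions ordered by
pairwise inclusion; at every non-leaf, either the first or the second component
is interrogated at a single new argument, with all possible answers present. -/
def IsTotalBiTree (T : Set (FPF A × FPF A)) : Prop :=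
  IsTreeOn (FPF.empty A, FPF.empty A) T ∧
  ∀ p ∈ T, ¬IsLeaf T p →
    (∃ a ∉ FPF.dom p.1, ∀ q : FPF A × FPF A,
        ImmSucc T p q ↔ q.2 = p.2 ∧ p.1 ≤ q.1 ∧ FPF.dom q.1 = insert a (FPF.dom p.1)) ∨
    (∃ b ∉ FPF.dom p.2, ∀ q : FPF A × FPF A,
        ImmSucc T p q ↔ q.1 = p.1 ∧ p.2 ≤ q.2 ∧ FPF.dom q.2 = insert b (FPF.dom p.2))

/-- `G` is a total bisequential function. -/
def BiSeqTotal (G : (A → A) → (A → A) → A) : Prop :=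
  ∃ (T : Set (FPF A × FPF A)) (F : FPF A × FPF A → A), IsTotalBiTree T ∧
    ∀ α β, ∃ v, IsLeaf T v ∧ agrees α v.1 ∧ agrees β v.2 ∧ G α β = F v

/-! ### Interrogations (total functions)

Throughout, `mk : List A → A` is an injective coding of finite sequences,
`qp b` is the code `⟨q,b⟩` of a query and `rp c` the code `⟨r,c⟩` of a result. -/

/-- `L` is an interrogation of `β` by `α`. -/
def Interrog (mk : List A → A) (qp : A → A) (α β : A → A) (L : List A) : Prop :=
  ∀ j (hj : j < L.length), ∃ b, α (mk (L.take j)) = qp b ∧ β b = L[j]'hj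

/-- `φ_α(β) = c` via interrogations. -/
def phiRel (mk : List A → A) (qp rp : A → A) (α β : A → A) (c : A) : Prop :=
  ∃ L, Interrog mk qp α β L ∧ α (mk L) = rp c

/-- `L` is an `a`-interrogation of `β` by `α`. -/
def AInterrog (mk : List A → A) (qp : A → A) (a : A) (α β : A → A) (L : List A) : Prop :=
  ∀ j (hj : j < L.length), ∃ b, α (mk (a :: L.take j)) = qp b ∧ β b = L[j]'hj

/-- `φ^a(α,β) = c` via `a`-interrogations. -/
def phiA (mk : List A → A) (qp rp : A → A) (a : A) (α β : A → A) (c : A) : Prop :=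
  ∃ L, AInterrog mk qp a α β L ∧ α (mk (a :: L)) = rp c

/-- The application of `K₂(A)`: `αβ` is defined with value `γ` iff
`φ^a(α,β) = γ a` for every `a`. -/
def AppRel (mk : List A → A) (qp rp : A → A) (α β γ : A → A) : Prop :=
  ∀ a, phiA mk qp rp a α β (γ a)

/-! ### Partial combinatory algebras (abstractly) -/

/-- A set with a partial binary application. -/
structure PCAStruct (X : Type*) where
  app : X → X → Part X

/-- Extension of the application to `Part`; `Part`-equality is Kleene equality. -/
def pap {X : Type*} (S : PCAStruct X) (u v : Part X) : Part X :=
  u.bind fun a => v.bind fun b => S.app a b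

/-- `S` is a partial combinatory algebra: there are `k`, `s` with
`kxy = x` (everywhere defined), `sxy` defined, and `sxyz ≃ (xz)(yz)`. -/
def IsPCA {X : Type*} (S : PCAStruct X) : Prop :=
  ∃ k s : X,
    (∀ x y : X, pap S (S.app k x) (Part.some y) = Part.some x) ∧
    (∀ x y : X, (pap S (S.app s x) (Part.some y)).Dom) ∧
    (∀ x y z : X,
      pap S (pap S (S.app s x) (Part.some y)) (Part.some z)
        = pap S (S.app x z) (S.app y z))

/-- `t`, `f` are Booleans of `S`: distinct, with a definition-by-cases combinator. -/
def IsBooleans {X : Type*} (S : PCAStruct X) (t f : X) : Prop :=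
  t ≠ f ∧ ∃ C : X, ∀ a b : X,
    pap S (pap S (S.app C t) (Part.some a)) (Part.some b) = Part.some a ∧
    pap S (pap S (S.app C f) (Part.some a)) (Part.some b) = Part.some b

/-- Applicative morphism `γ : S → T`: a total relation such that some realizer
`r` tracks application. -/
def IsAppMor {X Y : Type*} (S : PCAStruct X) (T : PCAStruct Y) (γ : X → Set Y) : Prop :=
  (∀ x, (γ x).Nonempty) ∧
  ∃ r : Y, ∀ x x' z : X, z ∈ S.app x x' → ∀ b ∈ γ x, ∀ b' ∈ γ x',
    ∃ w, w ∈ pap T (T.app r b) (Part.some b') ∧ w ∈ γ z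

/-- The preorder on applicative morphisms. -/
def morLE {X Y : Type*} (T : PCAStruct Y) (γ γ' : X → Set Y) : Prop :=
  ∃ s : Y, ∀ x : X, ∀ b ∈ γ x, ∃ c, c ∈ T.app s b ∧ c ∈ γ' x

def morEquiv {X Y : Type*} (T : PCAStruct Y) (γ γ' : X → Set Y) : Prop :=
  morLE T γ γ' ∧ morLE T γ' γ

/-- Composition of applicative morphisms (as total relations). -/
def morComp {X Y Z : Type*} (γ : X → Set Y) (ε : Y → Set Z) : X → Set Z :=
  fun x => ⋃ y ∈ γ x, ε y

/-- Decidability of a morphism w.r.t. chosen Booleans. -/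
def IsDecidableMor {X Y : Type*} (T : PCAStruct Y) (γ : X → Set Y)
    (tX fX : X) (tY fY : Y) : Prop :=
  ∃ d : Y, (∀ b ∈ γ tX, T.app d b = Part.some tY) ∧
    (∀ b ∈ γ fX, T.app d b = Part.some fY)

/-- `rf` represents the partial function `f : X ⇀ X` w.r.t. `γ`. -/
def RepresentsPFun {X Y : Type*} (T : PCAStruct Y) (γ : X → Set Y)
    (f : X → Option X) (rf : Y) : Prop :=
  ∀ a x, f a = some x → ∀ b ∈ γ a, ∃ c, c ∈ T.app rf b ∧ c ∈ γ x

/-- The pca `K₂(A)` on `A^A` (application via `a`-interrogations). -/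
def K2 (mk : List A → A) (qp rp : A → A) : PCAStruct (A → A) where
  app α β := ⟨∀ a, ∃ c, phiA mk qp rp a α β c, fun h a => (h a).choose⟩

/-! ### Interrogations for partial functions -/

/-- Interrogation of a partial `β` by a partial `α`. -/
def PInterrog (mk : List A → A) (qp : A → A) (α β : A → Option A) (L : List A) : Prop :=
  ∀ j (hj : j < L.length), ∃ b, α (mk (L.take j)) = some (qp b) ∧ β b = some (L[j]'hj)

/-- `φ_α(β) = c` for partial functions. -/
def phiPRel (mk : List A → A) (qp rp : A → A) (α β : A → Option A) (c : A) : Prop :=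
  ∃ L, PInterrog mk qp α β L ∧ α (mk L) = some (rp c)

/-- `a`-interrogation of a partial `β` by a partial `α`. -/
def PAInterrog (mk : List A → A) (qp : A → A) (a : A) (α β : A → Option A)
    (L : List A) : Prop :=
  ∀ j (hj : j < L.length), ∃ b, α (mk (a :: L.take j)) = some (qp b) ∧ β b = some (L[j]'hj)

/-- `φ^a(α,β) = c` for partial functions. -/
def phiPA (mk : List A → A) (qp rp : A → A) (a : A) (α β : A → Option A) (c : A) : Prop :=
  ∃ L, PAInterrog mk qp a α β L ∧ α (mk (a :: L)) = some (rp c)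

/-- The (total!) application of `K₂^p(A)` on partial functions. -/
def K2pApp (mk : List A → A) (qp rp : A → A) (α β : A → Option A) : A → Option A :=
  fun a => if h : ∃ c, phiPA mk qp rp a α β c then some h.choose else none

/-- `K₂^p(A)` as a `PCAStruct` (with everywhere-defined application). -/
def K2p (mk : List A → A) (qp rp : A → A) : PCAStruct (A → Option A) :=
  ⟨fun α β => Part.some (K2pApp mk qp rp α β)⟩

/-! ### A pca with standard structure (Booleans, pairing, tuple coding, recursion) -/

/-- A pca together with the standard derived structure: Booleans with a case
combinator, pairing, an injective standard tuple coding with combinators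
manipulating it, and a fixed-point combinator. All of these exist in any
(nontrivial) pca. -/
structure StdPCA (A : Type u) where
  S : PCAStruct A
  isPCA : IsPCA S
  t : A
  f : A
  t_ne_f : t ≠ f
  Cc : A
  C_t : ∀ a b : A, pap S (pap S (S.app Cc t) (Part.some a)) (Part.some b) = Part.some a
  C_f : ∀ a b : A, pap S (pap S (S.app Cc f) (Part.some a)) (Part.some b) = Part.some b
  pairF : A → A → A
  Pc : A
  P0 : A
  P1 : A
  P_spec : ∀ x y : A, pap S (S.app Pc x) (Part.some y) = Part.some (pairF x y)
  P0_spec : ∀ x y : A, S.app P0 (pairF x y) = Part.some x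
  P1_spec : ∀ x y : A, S.app P1 (pairF x y) = Part.some y
  tup : List A → A
  tup_inj : Function.Injective tup
  CONS : A
  CONS_spec : ∀ (x : A) (L : List A),
    pap S (S.app CONS x) (Part.some (tup L)) = Part.some (tup (x :: L))
  SNOC : A
  SNOC_spec : ∀ (L : List A) (y : A),
    pap S (S.app SNOC (tup L)) (Part.some y) = Part.some (tup (L ++ [y]))
  Zc : A
  Z_spec : ∀ g : A, (S.app Zc g).Dom ∧ ∀ zg ∈ S.app Zc g, ∀ x : A,
    S.app zg x = pap S (S.app g zg) (Part.some x)

/-- The partial function `x ↦ a·x` represented by `a ∈ A`. -/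
def abar (P : StdPCA A) (a : A) : A → Option A :=
  fun x => if h : (P.S.app a x).Dom then some ((P.S.app a x).get h) else none

/-- An `x`-interrogation of the oracle `g : A ⇀ A` by `a ∈ A`, inside the pca. -/
def OInterrog (P : StdPCA A) (g : A → Option A) (a x : A) (L : List A) : Prop :=
  ∀ j (hj : j < L.length), ∃ v,
    P.S.app a (P.tup (x :: L.take j)) = Part.some (P.pairF P.f v) ∧ g v = some (L[j]'hj)

/-- The oracle application of `A[g]` : `a ·^g x = c`. -/
def oapp (P : StdPCA A) (g : A → Option A) (a x c : A) : Prop :=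
  ∃ L, OInterrog P g a x L ∧ P.S.app a (P.tup (x :: L)) = Part.some (P.pairF P.t c)

/-- `fn ≤_T g` : `fn` is representable in `A[g]`. -/
def leT (P : StdPCA A) (fn g : A → Option A) : Prop :=
  ∃ a : A, ∀ x y, fn x = some y → oapp P g a x y

/-- `j` is the join `f ⊔ g`. -/
def JoinSpec (P : StdPCA A) (f g j : A → Option A) : Prop :=
  (∀ x, j (P.pairF P.t x) = f x) ∧ (∀ x, j (P.pairF P.f x) = g x) ∧
  (∀ y, (∀ x, y ≠ P.pairF P.t x ∧ y ≠ P.pairF P.f x) → j y = none)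

/-- `K₂(A)` (built from the coding `mk`, `q`, `r`) is compatible with the pca
structure on `A`: elements of `A` translate between the codings and between
`q, r` and `⊥, ⊤`. -/
def CompatCoding (P : StdPCA A) (mk : List A → A) (q r : A) : Prop :=
  (∃ a : A, ∀ L, P.S.app a (mk L) = Part.some (P.tup L)) ∧
  (∃ b : A, ∀ L, P.S.app b (P.tup L) = Part.some (mk L)) ∧
  (∃ c : A, P.S.app c q = Part.some P.f ∧ P.S.app c r = Part.some P.t)

/-! ### Auxiliary material for Statement 6 -/

section Statement6Aux

lemma FPF.le_def {s t : FPF A} : s ≤ t ↔ s.val ⊆ t.val := Iff.rfl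

lemma FPF.ext' {s t : FPF A} (h : s.val = t.val) : s = t := Subtype.ext h

lemma FPF.mem_dom {p : FPF A} {a : A} : a ∈ FPF.dom p ↔ ∃ b, (a, b) ∈ p.val := by
  constructor
  · rintro ⟨⟨x, y⟩, hxy, rfl⟩; exact ⟨y, hxy⟩
  · rintro ⟨b, hb⟩; exact ⟨(a, b), hb, rfl⟩

/-- Extend a finite partial function by one new value. -/
def FPF.extend (p : FPF A) (a y : A) : FPF A :=
  if h : a ∈ FPF.dom p then p else
    ⟨insert (a, y) p.val, by
      refine ⟨?_, p.prop.2.insert _⟩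
      intro x b b' hb hb'
      rcases Set.mem_insert_iff.mp hb with h1 | h1 <;>
        rcases Set.mem_insert_iff.mp hb' with h2 | h2
      · rw [Prod.mk.injEq] at h1 h2; rw [h1.2, h2.2]
      · rw [Prod.mk.injEq] at h1; exact absurd (FPF.mem_dom.mpr ⟨b', h1.1 ▸ h2⟩) h
      · rw [Prod.mk.injEq] at h2; exact absurd (FPF.mem_dom.mpr ⟨b, h2.1 ▸ h1⟩) h
      · exact p.prop.1 h1 h2⟩

lemma FPF.extend_val {p : FPF A} {a : A} (h : a ∉ FPF.dom p) (y : A) :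
    (p.extend a y).val = insert (a, y) p.val := by
  rw [FPF.extend, dif_neg h]

lemma FPF.mem_extend {p : FPF A} {a : A} (h : a ∉ FPF.dom p) (y : A) :
    (a, y) ∈ (p.extend a y).val := by
  rw [FPF.extend_val h]; exact Set.mem_insert _ _

lemma FPF.le_extend {p : FPF A} {a : A} (h : a ∉ FPF.dom p) (y : A) :
    p ≤ p.extend a y := by
  rw [FPF.le_def, FPF.extend_val h]; exact Set.subset_insert _ _

lemma FPF.extend_ne {p : FPF A} {a : A} (h : a ∉ FPF.dom p) (y : A) :
    p.extend a y ≠ p := fun he =>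
  h (FPF.mem_dom.mpr ⟨y, by rw [← he]; exact FPF.mem_extend h y⟩)

lemma FPF.lt_extend {p : FPF A} {a : A} (h : a ∉ FPF.dom p) (y : A) :
    p < p.extend a y :=
  lt_of_le_of_ne (FPF.le_extend h y) (Ne.symm (FPF.extend_ne h y))

lemma FPF.dom_extend {p : FPF A} {a : A} (h : a ∉ FPF.dom p) (y : A) :
    FPF.dom (p.extend a y) = insert a (FPF.dom p) := by
  unfold FPF.dom
  rw [FPF.extend_val h, Set.image_insert_eq]

lemma FPF.ncard_extend {p : FPF A} {a : A} (h : a ∉ FPF.dom p) (y : A) :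
    (p.extend a y).val.ncard = p.val.ncard + 1 := by
  rw [FPF.extend_val h]
  exact Set.ncard_insert_of_notMem (fun hm => h (FPF.mem_dom.mpr ⟨y, hm⟩)) p.prop.2

lemma FPF.eq_extend {s t : FPF A} {a y : A} (hsub : s.val ⊆ t.val)
    (hdom : FPF.dom t = insert a (FPF.dom s)) (ha : a ∉ FPF.dom s)
    (hmem : (a, y) ∈ t.val) : t = s.extend a y := by
  apply FPF.ext'
  rw [FPF.extend_val ha]
  apply Set.Subset.antisymm
  · rintro ⟨x, b⟩ hxb
    have hx : x ∈ FPF.dom t := FPF.mem_dom.mpr ⟨b, hxb⟩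
    rw [hdom] at hx
    rcases Set.mem_insert_iff.mp hx with rfl | hx
    · exact Or.inl (by rw [t.prop.1 hxb hmem])
    · obtain ⟨b', hb'⟩ := FPF.mem_dom.mp hx
      have : b = b' := t.prop.1 hxb (hsub hb')
      exact Or.inr (this ▸ hb')
  · intro z hz
    rcases Set.mem_insert_iff.mp hz with rfl | hz
    · exact hmem
    · exact hsub hz

/-- Total size of a node (pair of finite partial functions). -/
def nsize (p : FPF A × FPF A) : ℕ := p.1.val.ncard + p.2.val.ncard

lemma nsize_le {p q : FPF A × FPF A} (h : p ≤ q) : nsize p ≤ nsize q :=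
  Nat.add_le_add (Set.ncard_le_ncard h.1 q.1.prop.2) (Set.ncard_le_ncard h.2 q.2.prop.2)

lemma nsize_lt {p q : FPF A × FPF A} (h : p < q) : nsize p < nsize q := by
  have hle := le_of_lt h
  by_cases h1 : p.1 = q.1
  · have h2 : p.2 ≠ q.2 := fun h2 => ne_of_lt h (Prod.ext h1 h2)
    have hss : p.2.val ⊂ q.2.val :=
      ssubset_of_subset_of_ne hle.2 (fun hv => h2 (FPF.ext' hv))
    have := Set.ncard_lt_ncard hss q.2.prop.2
    have h1' : p.1.val.ncard = q.1.val.ncard := by rw [h1]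
    unfold nsize; omega
  · have hss : p.1.val ⊂ q.1.val :=
      ssubset_of_subset_of_ne hle.1 (fun hv => h1 (FPF.ext' hv))
    have ha := Set.ncard_lt_ncard hss q.1.prop.2
    have hb : p.2.val.ncard ≤ q.2.val.ncard := Set.ncard_le_ncard hle.2 q.2.prop.2
    unfold nsize; omega

lemma agrees_empty (α : A → A) : agrees α (FPF.empty A) :=
  fun _ _ h => absurd h (Set.notMem_empty _)

lemma agrees_mono {α : A → A} {s t : FPF A} (h : s ≤ t) (ht : agrees α t) :
    agrees α s := fun _ _ hab => ht (h hab)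

lemma agrees_extend {α : A → A} {p : FPF A} {a : A} (hp : agrees α p)
    (ha : a ∉ FPF.dom p) : agrees α (p.extend a (α a)) := by
  intro x y hxy
  rw [FPF.extend_val ha] at hxy
  rcases Set.mem_insert_iff.mp hxy with heq | hxy
  · rw [Prod.mk.injEq] at heq; rw [heq.1, heq.2]
  · exact hp hxy

/-- `p` is an α-branching node with query point `a`. -/
def ABr (T : Set (FPF A × FPF A)) (p : FPF A × FPF A) (a : A) : Prop :=
  a ∉ FPF.dom p.1 ∧ ∀ q : FPF A × FPF A,
    ImmSucc T p q ↔ q.2 = p.2 ∧ p.1 ≤ q.1 ∧ FPF.dom q.1 = insert a (FPF.dom p.1)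

/-- `p` is a β-branching node with query point `b`. -/
def BBr (T : Set (FPF A × FPF A)) (p : FPF A × FPF A) (b : A) : Prop :=
  b ∉ FPF.dom p.2 ∧ ∀ q : FPF A × FPF A,
    ImmSucc T p q ↔ q.1 = p.1 ∧ p.2 ≤ q.2 ∧ FPF.dom q.2 = insert b (FPF.dom p.2)

lemma ABr.succ {T : Set (FPF A × FPF A)} {p : FPF A × FPF A} {a : A}
    (h : ABr T p a) (y : A) : ImmSucc T p (p.1.extend a y, p.2) :=
  (h.2 _).mpr ⟨rfl, FPF.le_extend h.1 y, FPF.dom_extend h.1 y⟩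

lemma BBr.succ {T : Set (FPF A × FPF A)} {p : FPF A × FPF A} {b : A}
    (h : BBr T p b) (c : A) : ImmSucc T p (p.1, p.2.extend b c) :=
  (h.2 _).mpr ⟨rfl, FPF.le_extend h.1 c, FPF.dom_extend h.1 c⟩

lemma ABr.unique {T : Set (FPF A × FPF A)} {p : FPF A × FPF A} {a a' : A}
    (h : ABr T p a) (h' : ABr T p a') : a = a' := by
  have hs := h.succ a
  have hd := ((h'.2 _).mp hs).2.2
  rw [FPF.dom_extend h.1] at hd
  have : a ∈ insert a' (FPF.dom p.1) := hd ▸ Set.mem_insert a _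
  rcases Set.mem_insert_iff.mp this with heq | hmem
  · exact heq
  · exact absurd hmem h.1

lemma BBr.unique {T : Set (FPF A × FPF A)} {p : FPF A × FPF A} {b b' : A}
    (h : BBr T p b) (h' : BBr T p b') : b = b' := by
  have hs := h.succ b
  have hd := ((h'.2 _).mp hs).2.2
  rw [FPF.dom_extend h.1] at hd
  have : b ∈ insert b' (FPF.dom p.2) := hd ▸ Set.mem_insert b _
  rcases Set.mem_insert_iff.mp this with heq | hmem
  · exact heq
  · exact absurd hmem h.1

lemma ABr.not_bbr {T : Set (FPF A × FPF A)} {p : FPF A × FPF A} {a b : A}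
    (h : ABr T p a) (h' : BBr T p b) : False := by
  have hs := h.succ a
  have hd := ((h'.2 _).mp hs).2.2
  exact h'.1 (by rw [hd]; exact Set.mem_insert _ _)

lemma ABr.nonleaf {T : Set (FPF A × FPF A)} {p : FPF A × FPF A} {a : A}
    (h : ABr T p a) : ¬ IsLeaf T p :=
  fun hl => hl.2 ⟨_, (h.succ a).1, (h.succ a).2.1⟩

lemma BBr.nonleaf {T : Set (FPF A × FPF A)} {p : FPF A × FPF A} {b : A}
    (h : BBr T p b) : ¬ IsLeaf T p :=
  fun hl => hl.2 ⟨_, (h.succ b).1, (h.succ b).2.1⟩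

lemma ABr.det {T : Set (FPF A × FPF A)} {p s : FPF A × FPF A} {a y : A}
    (h : ABr T p a) (hs : ImmSucc T p s) (hy : (a, y) ∈ s.1.val) :
    s = (p.1.extend a y, p.2) := by
  obtain ⟨h2, hle, hdom⟩ := (h.2 s).mp hs
  exact Prod.ext (FPF.eq_extend hle hdom h.1 hy) h2

lemma BBr.det {T : Set (FPF A × FPF A)} {p s : FPF A × FPF A} {b y : A}
    (h : BBr T p b) (hs : ImmSucc T p s) (hy : (b, y) ∈ s.2.val) :
    s = (p.1, p.2.extend b y) := by
  obtain ⟨h1, hle, hdom⟩ := (h.2 s).mp hs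
  exact Prod.ext h1 (FPF.eq_extend hle hdom h.1 hy)

lemma branch_total {T : Set (FPF A × FPF A)} (hT : IsTotalBiTree T)
    {p : FPF A × FPF A} (hp : p ∈ T) (hnl : ¬IsLeaf T p) :
    (∃ a, ABr T p a) ∨ (∃ b, BBr T p b) := hT.2 p hp hnl

lemma finite_le_set (v : FPF A × FPF A) :
    Set.Finite {t : FPF A × FPF A | t ≤ v} := by
  have h1 : Set.Finite {s : Set (A × A) | s ⊆ v.1.val} := v.1.prop.2.finite_subsets
  have h2 : Set.Finite {s : Set (A × A) | s ⊆ v.2.val} := v.2.prop.2.finite_subsets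
  apply Set.Finite.of_finite_image (f := fun t : FPF A × FPF A => (t.1.val, t.2.val))
  · apply Set.Finite.subset (h1.prod h2)
    rintro ⟨s1, s2⟩ ⟨t, ht, heq⟩
    rw [Prod.mk.injEq] at heq
    exact ⟨heq.1 ▸ ht.1, heq.2 ▸ ht.2⟩
  · rintro t1 _ t2 _ heq
    rw [Prod.mk.injEq] at heq
    exact Prod.ext (FPF.ext' heq.1) (FPF.ext' heq.2)

lemma exists_immSucc_le {T : Set (FPF A × FPF A)} {p v : FPF A × FPF A}
    (hp : p ∈ T) (hv : v ∈ T) (hpv : p < v) :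
    ∃ s, ImmSucc T p s ∧ s ≤ v := by
  have hfin : Set.Finite {t : FPF A × FPF A | t ∈ T ∧ p < t ∧ t ≤ v} :=
    (finite_le_set v).subset (fun t ht => ht.2.2)
  have hne : Set.Nonempty {t : FPF A × FPF A | t ∈ T ∧ p < t ∧ t ≤ v} :=
    ⟨v, hv, hpv, le_refl v⟩
  obtain ⟨s₀, hs₀, hmin⟩ := Set.exists_min_image _ nsize hfin hne
  refine ⟨s₀, ⟨hs₀.1, hs₀.2.1, ?_⟩, hs₀.2.2⟩
  rintro ⟨t, htT, hpt, hts⟩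
  have htS : t ∈ {t : FPF A × FPF A | t ∈ T ∧ p < t ∧ t ≤ v} :=
    ⟨htT, hpt, le_trans (le_of_lt hts) hs₀.2.2⟩
  exact absurd (hmin t htS) (not_le.mpr (nsize_lt hts))

lemma exists_pred {T : Set (FPF A × FPF A)}
    (htree : IsTreeOn (FPF.empty A, FPF.empty A) T) {p : FPF A × FPF A}
    (hp : p ∈ T) (hne : p ≠ (FPF.empty A, FPF.empty A)) :
    ∃ w, w ∈ T ∧ ImmSucc T w p := by
  have hfin : Set.Finite {t : FPF A × FPF A | t ∈ T ∧ t < p} :=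
    (finite_le_set p).subset (fun t ht => le_of_lt ht.2)
  have hne' : Set.Nonempty {t : FPF A × FPF A | t ∈ T ∧ t < p} :=
    ⟨(FPF.empty A, FPF.empty A), htree.1,
      lt_of_le_of_ne (htree.2.1 p hp) (Ne.symm hne)⟩
  obtain ⟨w, hw, hmax⟩ := Set.exists_max_image _ nsize hfin hne'
  refine ⟨w, hw.1, hp, hw.2, ?_⟩
  rintro ⟨t, htT, hwt, htp⟩
  exact absurd (hmax t ⟨htT, htp⟩) (not_le.mpr (nsize_lt hwt))

/-- Any node of the tree consistent with `(α, β)` lies below the `(α,β)`-leaf. -/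
lemma consistent_le {T : Set (FPF A × FPF A)} (hT : IsTotalBiTree T)
    {α β : A → A} {v : FPF A × FPF A} (hv : IsLeaf T v)
    (hvα : agrees α v.1) (hvβ : agrees β v.2) :
    ∀ (n : ℕ) (p : FPF A × FPF A), nsize p ≤ n → p ∈ T →
      agrees α p.1 → agrees β p.2 → p ≤ v := by
  intro n
  induction n with
  | zero =>
    intro p hn _ _ _
    have h0 : nsize p = 0 := Nat.le_zero.mp hn
    unfold nsize at h0
    have e1 : p.1.val = ∅ := (Set.ncard_eq_zero p.1.prop.2).mp (by omega)
    have e2 : p.2.val = ∅ := (Set.ncard_eq_zero p.2.prop.2).mp (by omega)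
    have hroot : p = (FPF.empty A, FPF.empty A) :=
      Prod.ext (FPF.ext' e1) (FPF.ext' e2)
    rw [hroot]
    exact hT.1.2.1 v hv.1
  | succ n ih =>
    intro p hn hp hpα hpβ
    by_cases hroot : p = (FPF.empty A, FPF.empty A)
    · rw [hroot]; exact hT.1.2.1 v hv.1
    obtain ⟨w, hwT, hwImm⟩ := exists_pred hT.1 hp hroot
    have hwlt : w < p := hwImm.2.1
    have hwle : w ≤ v := by
      refine ih w ?_ hwT (agrees_mono (le_of_lt hwlt).1 hpα)
        (agrees_mono (le_of_lt hwlt).2 hpβ)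
      have := nsize_lt hwlt; omega
    have hwv : w ≠ v := fun he => hv.2 ⟨p, hp, he ▸ hwlt⟩
    have hwlv : w < v := lt_of_le_of_ne hwle hwv
    obtain ⟨s, hsImm, hsv⟩ := exists_immSucc_le hwT hv.1 hwlv
    have hwnl : ¬IsLeaf T w := fun hl => hl.2 ⟨p, hp, hwlt⟩
    rcases branch_total hT hwT hwnl with ⟨a, ha⟩ | ⟨b, hb⟩
    · have hpdom : a ∈ FPF.dom p.1 := by
        have := ((ha.2 p).mp hwImm).2.2
        rw [this]; exact Set.mem_insert _ _
      obtain ⟨y, hy⟩ := FPF.mem_dom.mp hpdom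
      have hyα : α a = y := hpα hy
      have hp_eq : p = (w.1.extend a y, w.2) := ABr.det ha hwImm hy
      have hsdom : a ∈ FPF.dom s.1 := by
        have := ((ha.2 s).mp hsImm).2.2
        rw [this]; exact Set.mem_insert _ _
      obtain ⟨y', hy'⟩ := FPF.mem_dom.mp hsdom
      have hy'α : α a = y' := hvα (hsv.1 hy')
      have hs_eq : s = (w.1.extend a y', w.2) := ABr.det ha hsImm hy'
      have : p = s := by rw [hp_eq, hs_eq, ← hyα, ← hy'α]
      rw [this]; exact hsv
    · have hpdom : b ∈ FPF.dom p.2 := by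
        have := ((hb.2 p).mp hwImm).2.2
        rw [this]; exact Set.mem_insert _ _
      obtain ⟨y, hy⟩ := FPF.mem_dom.mp hpdom
      have hyβ : β b = y := hpβ hy
      have hp_eq : p = (w.1, w.2.extend b y) := BBr.det hb hwImm hy
      have hsdom : b ∈ FPF.dom s.2 := by
        have := ((hb.2 s).mp hsImm).2.2
        rw [this]; exact Set.mem_insert _ _
      obtain ⟨y', hy'⟩ := FPF.mem_dom.mp hsdom
      have hy'β : β b = y' := hvβ (hsv.2 hy')
      have hs_eq : s = (w.1, w.2.extend b y') := BBr.det hb hsImm hy'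
      have : p = s := by rw [hp_eq, hs_eq, ← hyβ, ← hy'β]
      rw [this]; exact hsv

/-- One step of the deterministic walk through `T` with total oracle `α` and a
queue of β-answers. -/
def tstepT (T : Set (FPF A × FPF A)) (α : A → A)
    (s : (FPF A × FPF A) × List A) : (FPF A × FPF A) × List A :=
  if h : ∃ a, ABr T s.1 a then
    ((s.1.1.extend h.choose (α h.choose), s.1.2), s.2)
  else if h' : ∃ b, BBr T s.1 b then
    (match s.2 with
     | [] => s
     | c :: L' => ((s.1.1, s.1.2.extend h'.choose c), L'))
  else s

/-- One step of the walk where α-answers are supplied from a finite list. -/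
def tstepW (T : Set (FPF A × FPF A))
    (s : (FPF A × FPF A) × List A × List A) :
    (FPF A × FPF A) × List A × List A :=
  if h : ∃ a, ABr T s.1 a then
    (match s.2.2 with
     | [] => s
     | y :: W' => ((s.1.1.extend h.choose y, s.1.2), s.2.1, W'))
  else if h' : ∃ b, BBr T s.1 b then
    (match s.2.1 with
     | [] => s
     | c :: L' => ((s.1.1, s.1.2.extend h'.choose c), L', s.2.2))
  else s

/-- The list of α-answers consumed during `n` steps of the total walk. -/
def wlist (T : Set (FPF A × FPF A)) (α : A → A) :
    ℕ → (FPF A × FPF A) × List A → List A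
  | 0, _ => []
  | n+1, s =>
    if h : ∃ a, ABr T s.1 a then α h.choose :: wlist T α n (tstepT T α s)
    else if (∃ b, BBr T s.1 b) ∧ s.2 ≠ [] then wlist T α n (tstepT T α s)
    else []

/-- Stabilized value of an iteration. -/
def stab {X : Type*} (f : X → X) (s : X) : X :=
  if h : ∃ n, f^[n+1] s = f^[n] s then f^[Nat.find h] s else s

section Statement6Machines

lemma iterate_stable {X : Type*} {f : X → X} {s : X} {m : ℕ}
    (h : f^[m+1] s = f^[m] s) : ∀ k, m ≤ k → f^[k] s = f^[m] s := by
  intro k hk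
  induction hk with
  | refl => rfl
  | @step k _ ihk =>
    rw [Function.iterate_succ_apply', ihk]
    exact (Function.iterate_succ_apply' f m s).symm.trans h

lemma stab_of_fix {X : Type*} {f : X → X} {s x : X} {m : ℕ}
    (hreach : f^[m] s = x) (hx : f x = x) : stab f s = x := by
  have hm : f^[m+1] s = f^[m] s := by
    rw [Function.iterate_succ_apply', hreach, hx]
  have hex : ∃ n, f^[n+1] s = f^[n] s := ⟨m, hm⟩
  rw [stab, dif_pos hex]
  have hfind := Nat.find_spec hex
  have hle : Nat.find hex ≤ m := Nat.find_min' hex hm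
  rw [← iterate_stable hfind m hle, hreach]

lemma tstepT_alpha {T : Set (FPF A × FPF A)} {α : A → A}
    {p : FPF A × FPF A} {L : List A} (h : ∃ a, ABr T p a) :
    tstepT T α (p, L) = ((p.1.extend h.choose (α h.choose), p.2), L) := by
  unfold tstepT; rw [dif_pos h]

lemma tstepT_beta {T : Set (FPF A × FPF A)} {α : A → A}
    {p : FPF A × FPF A} {c : A} {L' : List A}
    (hna : ¬∃ a, ABr T p a) (hb : ∃ b, BBr T p b) :
    tstepT T α (p, c :: L') = ((p.1, p.2.extend hb.choose c), L') := by
  unfold tstepT; rw [dif_neg hna, dif_pos hb]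

lemma tstepT_fix_of {T : Set (FPF A × FPF A)} {α : A → A}
    {p : FPF A × FPF A} {L : List A}
    (hna : ¬∃ a, ABr T p a) (hb : (∃ b, BBr T p b) → L = []) :
    tstepT T α (p, L) = (p, L) := by
  unfold tstepT; rw [dif_neg hna]
  by_cases h : ∃ b, BBr T p b
  · rw [dif_pos h]; rw [hb h]
  · rw [dif_neg h]

lemma tstepT_fix_inv {T : Set (FPF A × FPF A)} {α : A → A}
    {p : FPF A × FPF A} {L : List A}
    (h : tstepT T α (p, L) = (p, L)) :
    (¬∃ a, ABr T p a) ∧ ((∃ b, BBr T p b) → L = []) := by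
  have hna : ¬∃ a, ABr T p a := by
    intro ha
    rw [tstepT_alpha ha] at h
    have := congrArg (fun z => z.1.1) h
    exact FPF.extend_ne ha.choose_spec.1 _ this
  refine ⟨hna, ?_⟩
  intro hbb
  by_contra hL
  obtain ⟨c, L', rfl⟩ := List.exists_cons_of_ne_nil hL
  rw [tstepT_beta hna hbb] at h
  have := congrArg (fun z => (z.2 : List A).length) h
  simp at this

lemma tstepW_alpha {T : Set (FPF A × FPF A)}
    {p : FPF A × FPF A} {L : List A} {y : A} {W' : List A}
    (h : ∃ a, ABr T p a) :
    tstepW T (p, L, y :: W') = ((p.1.extend h.choose y, p.2), L, W') := by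
  unfold tstepW; rw [dif_pos h]

lemma tstepW_blocked {T : Set (FPF A × FPF A)}
    {p : FPF A × FPF A} {L : List A} (h : ∃ a, ABr T p a) :
    tstepW T (p, L, []) = (p, L, []) := by
  unfold tstepW; rw [dif_pos h]

lemma tstepW_beta {T : Set (FPF A × FPF A)}
    {p : FPF A × FPF A} {c : A} {L' W : List A}
    (hna : ¬∃ a, ABr T p a) (hb : ∃ b, BBr T p b) :
    tstepW T (p, c :: L', W) = ((p.1, p.2.extend hb.choose c), L', W) := by
  unfold tstepW; rw [dif_neg hna, dif_pos hb]

lemma tstepW_fix_of {T : Set (FPF A × FPF A)}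
    {p : FPF A × FPF A} {L W : List A}
    (hna : ¬∃ a, ABr T p a) (hb : (∃ b, BBr T p b) → L = []) :
    tstepW T (p, L, W) = (p, L, W) := by
  unfold tstepW; rw [dif_neg hna]
  by_cases h : ∃ b, BBr T p b
  · rw [dif_pos h]; rw [hb h]
  · rw [dif_neg h]

end Statement6Machines

/-- The α-climb from a node below the leaf `v` terminates at a non-α-branching
node, staying below `v`. -/
lemma climb_term {T : Set (FPF A × FPF A)} (hT : IsTotalBiTree T)
    {α : A → A} {v : FPF A × FPF A} (hv : IsLeaf T v) (hvα : agrees α v.1) :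
    ∀ (k : ℕ) (p : FPF A × FPF A) (L : List A), p ∈ T → p ≤ v → agrees α p.1 →
      nsize v - nsize p ≤ k →
      ∃ n p', (tstepT T α)^[n] (p, L) = (p', L) ∧ p' ∈ T ∧ p ≤ p' ∧ p' ≤ v ∧
        agrees α p'.1 ∧ ¬∃ a, ABr T p' a := by
  intro k
  induction k with
  | zero =>
    intro p L hp hpv hpα hk
    by_cases h : ∃ a, ABr T p a
    · exfalso
      have hpne : p ≠ v := fun he => h.choose_spec.nonleaf (he ▸ hv)
      have := nsize_lt (lt_of_le_of_ne hpv hpne)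
      omega
    · exact ⟨0, p, rfl, hp, le_refl _, hpv, hpα, h⟩
  | succ k ih =>
    intro p L hp hpv hpα hk
    by_cases h : ∃ a, ABr T p a
    · have ha₀ : ABr T p h.choose := h.choose_spec
      have hpne : p ≠ v := fun he => ha₀.nonleaf (he ▸ hv)
      have hplt := lt_of_le_of_ne hpv hpne
      obtain ⟨s, hsImm, hsv⟩ := exists_immSucc_le hp hv.1 hplt
      have hdom : h.choose ∈ FPF.dom s.1 := by
        have := ((ha₀.2 s).mp hsImm).2.2
        rw [this]; exact Set.mem_insert _ _
      obtain ⟨y, hy⟩ := FPF.mem_dom.mp hdom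
      have hyv : α h.choose = y := hvα (hsv.1 hy)
      have hs_eq : s = (p.1.extend h.choose (α h.choose), p.2) := by
        rw [hyv]; exact ABr.det ha₀ hsImm hy
      have hstep : tstepT T α (p, L) = (s, L) := by
        rw [tstepT_alpha h, hs_eq]
      have hsT : s ∈ T := hsImm.1
      have hsα : agrees α s.1 := by
        rw [hs_eq]; exact agrees_extend hpα ha₀.1
      have hns : nsize p < nsize s := nsize_lt hsImm.2.1
      have hns' : nsize s ≤ nsize v := nsize_le hsv
      obtain ⟨n, p', hrun, h₁, h₂, h₃, h₄, h₅⟩ :=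
        ih s L hsT hsv hsα (by omega)
      exact ⟨n+1, p', by rw [Function.iterate_succ_apply, hstep]; exact hrun,
        h₁, le_trans (le_of_lt hsImm.2.1) h₂, h₃, h₄, h₅⟩
    · exact ⟨0, p, rfl, hp, le_refl _, hpv, hpα, h⟩

/-- The total walk always stabilizes. -/
lemma term_aux {T : Set (FPF A × FPF A)} (hT : IsTotalBiTree T)
    (hG : ∀ (α' β' : A → A), ∃ v, IsLeaf T v ∧ agrees α' v.1 ∧ agrees β' v.2)
    (α : A → A) :
    ∀ (L : List A) (p : FPF A × FPF A), p ∈ T → agrees α p.1 →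
      ∃ n, (tstepT T α)^[n+1] (p, L) = (tstepT T α)^[n] (p, L) := by
  have key : ∀ (L : List A) (p : FPF A × FPF A), p ∈ T → agrees α p.1 →
      ∃ n p', (tstepT T α)^[n] (p, L) = (p', L) ∧ p' ∈ T ∧ agrees α p'.1 ∧
        ¬∃ a, ABr T p' a := by
    intro L p hp hpα
    classical
    set β' : A → A := fun x => if h : ∃ y, (x, y) ∈ p.2.val then h.choose else x
      with hβ'
    have hpβ : agrees β' p.2 := by
      intro x y hxy
      have hx : ∃ y', (x, y') ∈ p.2.val := ⟨y, hxy⟩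
      show (if h : ∃ y', (x, y') ∈ p.2.val then h.choose else x) = y
      rw [dif_pos hx]
      exact p.2.prop.1 hx.choose_spec hxy
    obtain ⟨v, hv, hvα, hvβ⟩ := hG α β'
    have hpv : p ≤ v := consistent_le hT hv hvα hvβ (nsize p) p le_rfl hp hpα hpβ
    obtain ⟨n, p', hrun, h₁, _, _, h₄, h₅⟩ :=
      climb_term hT hv hvα (nsize v - nsize p) p L hp hpv hpα le_rfl
    exact ⟨n, p', hrun, h₁, h₄, h₅⟩
  intro L
  induction L with
  | nil =>
    intro p hp hpα
    obtain ⟨n, p', hrun, _, _, hno⟩ := key [] p hp hpα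
    have hfix : tstepT T α (p', []) = (p', []) := tstepT_fix_of hno (fun _ => rfl)
    exact ⟨n, by rw [Function.iterate_succ_apply', hrun, hfix]⟩
  | cons c L' ihL =>
    intro p hp hpα
    obtain ⟨n, p', hrun, hp'T, hp'α, hno⟩ := key (c :: L') p hp hpα
    by_cases hb : ∃ b, BBr T p' b
    · have hstep : tstepT T α (p', c :: L') = ((p'.1, p'.2.extend hb.choose c), L') :=
        tstepT_beta hno hb
      have hmem : (p'.1, p'.2.extend hb.choose c) ∈ T := (hb.choose_spec.succ c).1
      obtain ⟨m, hm⟩ := ihL (p'.1, p'.2.extend hb.choose c) hmem hp'α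
      refine ⟨m + (n+1), ?_⟩
      have hbase : (tstepT T α)^[n+1] (p, c :: L') =
          ((p'.1, p'.2.extend hb.choose c), L') := by
        rw [Function.iterate_succ_apply', hrun, hstep]
      have h2 : (tstepT T α)^[m + (n+1)] (p, c :: L') =
          (tstepT T α)^[m] ((p'.1, p'.2.extend hb.choose c), L') := by
        rw [Function.iterate_add_apply, hbase]
      have h3 : (tstepT T α)^[m + (n+1) + 1] (p, c :: L') =
          (tstepT T α)^[m+1] ((p'.1, p'.2.extend hb.choose c), L') := by
        rw [show m + (n+1) + 1 = (m+1) + (n+1) by omega,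
          Function.iterate_add_apply, hbase]
      rw [h3, h2, hm]
    · have hfix : tstepT T α (p', c :: L') = (p', c :: L') :=
        tstepT_fix_of hno (fun h => absurd h hb)
      exact ⟨n, by rw [Function.iterate_succ_apply', hrun, hfix]⟩

/-- Extending the answer queue: a run that empties its queue can be replayed
with extra answers appended. -/
lemma run_append {T : Set (FPF A × FPF A)} {α : A → A} (M : List A) :
    ∀ (n : ℕ) (x : FPF A × FPF A) (K : List A) (p' : FPF A × FPF A),
      (tstepT T α)^[n] (x, K) = (p', []) →
      ∃ m, (tstepT T α)^[m] (x, K ++ M) = (p', M) := by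
  intro n
  induction n with
  | zero =>
    intro x K p' h
    rw [Function.iterate_zero_apply, Prod.mk.injEq] at h
    obtain ⟨rfl, rfl⟩ := h
    exact ⟨0, by simp⟩
  | succ n ih =>
    intro x K p' h
    rw [Function.iterate_succ_apply] at h
    by_cases ha : ∃ a, ABr T x a
    · rw [tstepT_alpha ha] at h
      obtain ⟨m, hm⟩ := ih _ K p' h
      refine ⟨m+1, ?_⟩
      rw [Function.iterate_succ_apply, tstepT_alpha ha]
      exact hm
    · by_cases hbb : ∃ b, BBr T x b
      · cases K with
        | nil =>
          have hfix : tstepT T α (x, ([] : List A)) = (x, []) :=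
            tstepT_fix_of ha (fun _ => rfl)
          rw [hfix, Function.iterate_fixed hfix] at h
          rw [Prod.mk.injEq] at h
          obtain ⟨rfl, -⟩ := h
          exact ⟨0, by simp⟩
        | cons c K' =>
          rw [tstepT_beta ha hbb] at h
          obtain ⟨m, hm⟩ := ih _ (K') p' h
          refine ⟨m+1, ?_⟩
          rw [List.cons_append, Function.iterate_succ_apply, tstepT_beta ha hbb]
          exact hm
      · have hfix : tstepT T α (x, K) = (x, K) :=
          tstepT_fix_of ha (fun h' => absurd h' hbb)
        rw [hfix, Function.iterate_fixed hfix, Prod.mk.injEq] at h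
        obtain ⟨rfl, rfl⟩ := h
        exact ⟨0, by simp⟩

/-- Feeding the walk exactly the α-answers it consumes reproduces it. -/
lemma sim1 {T : Set (FPF A × FPF A)} (α : A → A) :
    ∀ (n : ℕ) (s : (FPF A × FPF A) × List A),
      (tstepW T)^[n] (s.1, s.2, wlist T α n s) =
        (((tstepT T α)^[n] s).1, ((tstepT T α)^[n] s).2, []) := by
  intro n
  induction n with
  | zero => intro s; rfl
  | succ n ih =>
    intro s
    obtain ⟨p, L⟩ := s
    by_cases ha : ∃ a, ABr T p a
    · have hw : wlist T α (n+1) (p, L) =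
          α ha.choose :: wlist T α n (tstepT T α (p, L)) := by
        rw [wlist.eq_def]; exact dif_pos ha
      rw [Function.iterate_succ_apply, Function.iterate_succ_apply, hw,
        tstepW_alpha ha, tstepT_alpha ha]
      exact ih ((p.1.extend ha.choose (α ha.choose), p.2), L)
    · by_cases hcond : (∃ b, BBr T p b) ∧ L ≠ []
      · obtain ⟨hb, hL⟩ := hcond
        obtain ⟨c, L', rfl⟩ := List.exists_cons_of_ne_nil hL
        have hw : wlist T α (n+1) (p, c :: L') =
            wlist T α n (tstepT T α (p, c :: L')) := by
          rw [wlist.eq_def]; exact (dif_neg ha).trans (if_pos ⟨hb, hL⟩)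
        rw [Function.iterate_succ_apply, Function.iterate_succ_apply, hw,
          tstepW_beta ha hb, tstepT_beta ha hb]
        exact ih ((p.1, p.2.extend hb.choose c), L')
      · have hL : (∃ b, BBr T p b) → L = [] := by
          intro hb
          by_contra hne
          exact hcond ⟨hb, hne⟩
        have hw : wlist T α (n+1) (p, L) = [] := by
          rw [wlist.eq_def]; exact (dif_neg ha).trans (if_neg hcond)
        have hfixT : tstepT T α (p, L) = (p, L) := tstepT_fix_of ha hL
        have hfixW : tstepW T (p, L, []) = (p, L, []) := tstepW_fix_of ha hL
        rw [hw, Function.iterate_fixed hfixT, Function.iterate_fixed hfixW]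

/-- Feeding the walk a proper prefix of its α-answers blocks it at the next
α-query. -/
lemma sim2 {T : Set (FPF A × FPF A)} (α : A → A) :
    ∀ (n : ℕ) (s : (FPF A × FPF A) × List A) (W' : List A),
      W' <+: wlist T α n s → W' ≠ wlist T α n s →
      ∃ (m : ℕ) (st : (FPF A × FPF A) × List A × List A) (aa : A),
        (tstepW T)^[m] (s.1, s.2, W') = st ∧ tstepW T st = st ∧
        ABr T st.1 aa ∧ W' ++ [α aa] <+: wlist T α n s := by
  intro n
  induction n with
  | zero =>
    intro s W' hpre hne
    exact absurd (List.prefix_nil.mp hpre) hne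
  | succ n ih =>
    intro s W' hpre hne
    obtain ⟨p, L⟩ := s
    by_cases ha : ∃ a, ABr T p a
    · have hw : wlist T α (n+1) (p, L) =
          α ha.choose :: wlist T α n (tstepT T α (p, L)) := by
        rw [wlist.eq_def]; exact dif_pos ha
      rw [hw] at hpre hne ⊢
      cases W' with
      | nil =>
        exact ⟨0, (p, L, []), ha.choose, rfl, tstepW_blocked ha, ha.choose_spec,
          ⟨wlist T α n (tstepT T α (p, L)), rfl⟩⟩
      | cons y W'' =>
        obtain ⟨hy, hpre'⟩ := List.cons_prefix_cons.mp hpre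
        subst hy
        have hne' : W'' ≠ wlist T α n (tstepT T α (p, L)) := by
          intro he; exact hne (by rw [he])
        obtain ⟨m, st, aa, h1, h2, h3, h4⟩ := ih (tstepT T α (p, L)) W'' hpre' hne'
        refine ⟨m+1, st, aa, ?_, h2, h3, ?_⟩
        · rw [Function.iterate_succ_apply, tstepW_alpha ha]
          rw [tstepT_alpha ha] at h1
          exact h1
        · rw [List.cons_append]
          exact List.cons_prefix_cons.mpr ⟨rfl, h4⟩
    · by_cases hcond : (∃ b, BBr T p b) ∧ L ≠ []
      · obtain ⟨hb, hL⟩ := hcond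
        obtain ⟨c, L', rfl⟩ := List.exists_cons_of_ne_nil hL
        have hw : wlist T α (n+1) (p, c :: L') =
            wlist T α n (tstepT T α (p, c :: L')) := by
          rw [wlist.eq_def]; exact (dif_neg ha).trans (if_pos ⟨hb, hL⟩)
        rw [hw] at hpre hne ⊢
        obtain ⟨m, st, aa, h1, h2, h3, h4⟩ := ih (tstepT T α (p, c :: L')) W' hpre hne
        refine ⟨m+1, st, aa, ?_, h2, h3, h4⟩
        rw [Function.iterate_succ_apply, tstepW_beta ha hb]
        rw [tstepT_beta ha hb] at h1
        exact h1
      · have hw : wlist T α (n+1) (p, L) = [] := by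
          rw [wlist.eq_def]; exact (dif_neg ha).trans (if_neg hcond)
        rw [hw] at hpre hne
        exact absurd (List.prefix_nil.mp hpre) hne

/-- Read off the value of `γ` at a stabilized state. -/
def outT (T : Set (FPF A × FPF A)) (F : FPF A × FPF A → A)
    (code : List A → A) (q r : A) (s : (FPF A × FPF A) × List A) : A :=
  if s.2 = [] then
    if h : ∃ b, BBr T s.1 b then code [q, h.choose]
    else if IsLeaf T s.1 then code [r, F s.1] else q
  else q

/-- The value `φ_G α` of the application, defined directly. -/
def gammaF (code : List A → A) (q r : A) (T : Set (FPF A × FPF A))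
    (F : FPF A × FPF A → A) (α : A → A) : A → A := fun x =>
  if h : ∃ L, x = code L then
    outT T F code q r (stab (tstepT T α) ((FPF.empty A, FPF.empty A), h.choose))
  else q

/-- The element `φ_G` itself. -/
def phiGF (code : List A → A) (q r : A) (T : Set (FPF A × FPF A))
    (F : FPF A × FPF A → A) : A → A := fun x =>
  if h : ∃ aW : A × List A, x = code (aW.1 :: aW.2) then
    if hL : ∃ L, h.choose.1 = code L then
      if _ : ∃ aa, ABr T
          (stab (tstepW T) ((FPF.empty A, FPF.empty A), hL.choose, h.choose.2)).1 aa
      then code [q, (‹∃ aa, ABr T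
          (stab (tstepW T) ((FPF.empty A, FPF.empty A), hL.choose, h.choose.2)).1 aa›).choose]
      else code [r, outT T F code q r
        ((stab (tstepW T) ((FPF.empty A, FPF.empty A), hL.choose, h.choose.2)).1,
         (stab (tstepW T) ((FPF.empty A, FPF.empty A), hL.choose, h.choose.2)).2.1)]
    else code [r, q]
  else q

lemma gamma_eval {code : List A → A} (hcode : Function.Injective code)
    (q r : A) (T : Set (FPF A × FPF A)) (F : FPF A × FPF A → A)
    (α : A → A) (L : List A) :
    gammaF code q r T F α (code L) =
      outT T F code q r (stab (tstepT T α) ((FPF.empty A, FPF.empty A), L)) := by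
  unfold gammaF
  have h : ∃ L', code L = code L' := ⟨L, rfl⟩
  rw [dif_pos h]
  have hch : h.choose = L := (hcode h.choose_spec).symm
  rw [hch]

lemma gamma_eval_junk {code : List A → A} {q r : A} {T : Set (FPF A × FPF A)}
    {F : FPF A × FPF A → A} {α : A → A} {x : A} (hx : ¬∃ L, x = code L) :
    gammaF code q r T F α x = q := dif_neg hx

lemma phiG_eval {code : List A → A} (hcode : Function.Injective code)
    (q r : A) (T : Set (FPF A × FPF A)) (F : FPF A × FPF A → A)
    (a : A) (W L : List A) (ha : a = code L) :
    phiGF code q r T F (code (a :: W)) =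
      if hA : ∃ aa, ABr T
          (stab (tstepW T) ((FPF.empty A, FPF.empty A), L, W)).1 aa
      then code [q, hA.choose]
      else code [r, outT T F code q r
        ((stab (tstepW T) ((FPF.empty A, FPF.empty A), L, W)).1,
         (stab (tstepW T) ((FPF.empty A, FPF.empty A), L, W)).2.1)] := by
  unfold phiGF
  have h : ∃ aW : A × List A, code (a :: W) = code (aW.1 :: aW.2) := ⟨(a, W), rfl⟩
  rw [dif_pos h]
  have heq : a :: W = h.choose.1 :: h.choose.2 := hcode h.choose_spec
  rw [List.cons.injEq] at heq
  have hch : h.choose = (a, W) := Prod.ext heq.1.symm heq.2.symm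
  rw [hch]
  have hL : ∃ L', ((a, W) : A × List A).1 = code L' := ⟨L, ha⟩
  rw [dif_pos hL]
  have hLch : hL.choose = L := by
    have h1 : code L = code hL.choose := by
      have := hL.choose_spec; rw [← this, ha]
    exact (hcode h1).symm
  rw [hLch]

lemma phiG_eval_junk {code : List A → A} (hcode : Function.Injective code)
    {q r : A} {T : Set (FPF A × FPF A)} {F : FPF A × FPF A → A}
    {a : A} (W : List A) (ha : ¬∃ L, a = code L) :
    phiGF code q r T F (code (a :: W)) = code [r, q] := by
  unfold phiGF
  have h : ∃ aW : A × List A, code (a :: W) = code (aW.1 :: aW.2) := ⟨(a, W), rfl⟩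
  rw [dif_pos h]
  have heq : a :: W = h.choose.1 :: h.choose.2 := hcode h.choose_spec
  rw [List.cons.injEq] at heq
  have hch : h.choose = (a, W) := Prod.ext heq.1.symm heq.2.symm
  rw [hch]
  have hL : ¬∃ L', ((a, W) : A × List A).1 = code L' := ha
  rw [dif_neg hL]

/-- Main correctness of `γ`: following the β-answers to the leaf `v` produces
an interrogation of `β` by `γ` ending with value `F v`. -/
lemma build {T : Set (FPF A × FPF A)} {F : FPF A × FPF A → A}
    {code : List A → A} (hcode : Function.Injective code) {q r : A}
    (hT : IsTotalBiTree T) {α β : A → A} {v : FPF A × FPF A}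
    (hv : IsLeaf T v) (hvα : agrees α v.1) (hvβ : agrees β v.2) :
    ∀ (k : ℕ) (p : FPF A × FPF A) (L₀ : List A) (n : ℕ),
      (tstepT T α)^[n] ((FPF.empty A, FPF.empty A), L₀) = (p, []) →
      tstepT T α (p, []) = (p, []) →
      p ∈ T → p ≤ v → nsize v - nsize p ≤ k →
      (∀ j (hj : j < L₀.length), ∃ b,
        gammaF code q r T F α (code (L₀.take j)) = code [q, b] ∧ β b = L₀[j]) →
      ∃ L, Interrog code (fun x => code [q, x]) (gammaF code q r T F α) β L ∧
        gammaF code q r T F α (code L) = code [r, F v] := by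
  have done : ∀ (p : FPF A × FPF A) (L₀ : List A) (n : ℕ),
      (tstepT T α)^[n] ((FPF.empty A, FPF.empty A), L₀) = (p, []) →
      tstepT T α (p, []) = (p, []) → p = v →
      (∀ j (hj : j < L₀.length), ∃ b,
        gammaF code q r T F α (code (L₀.take j)) = code [q, b] ∧ β b = L₀[j]) →
      ∃ L, Interrog code (fun x => code [q, x]) (gammaF code q r T F α) β L ∧
        gammaF code q r T F α (code L) = code [r, F v] := by
    intro p L₀ n hn hfix hpeq hinv
    subst hpeq
    have hstab : stab (tstepT T α) ((FPF.empty A, FPF.empty A), L₀) = (p, []) :=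
      stab_of_fix hn hfix
    have hγ : gammaF code q r T F α (code L₀) = outT T F code q r (p, []) := by
      rw [gamma_eval hcode, hstab]
    have hnb : ¬∃ b, BBr T p b := fun hb => hb.choose_spec.nonleaf hv
    have hout : outT T F code q r (p, []) = code [r, F p] := by
      unfold outT
      rw [if_pos rfl, dif_neg hnb, if_pos hv]
    exact ⟨L₀, fun j hj => hinv j hj, by rw [hγ, hout]⟩
  intro k
  induction k with
  | zero =>
    intro p L₀ n hn hfix hpT hpv hk hinv
    by_cases hpeq : p = v
    · exact done p L₀ n hn hfix hpeq hinv
    · exfalso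
      have := nsize_lt (lt_of_le_of_ne hpv hpeq)
      omega
  | succ k ih =>
    intro p L₀ n hn hfix hpT hpv hk hinv
    by_cases hpeq : p = v
    · exact done p L₀ n hn hfix hpeq hinv
    have hplt : p < v := lt_of_le_of_ne hpv hpeq
    have hnl : ¬IsLeaf T p := fun hl => hl.2 ⟨v, hv.1, hplt⟩
    have hna : ¬∃ a, ABr T p a := (tstepT_fix_inv hfix).1
    obtain ⟨b₀, hb₀⟩ := (branch_total hT hpT hnl).resolve_left hna
    obtain ⟨t, htImm, htv⟩ := exists_immSucc_le hpT hv.1 hplt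
    have htdom : b₀ ∈ FPF.dom t.2 := by
      have := ((hb₀.2 t).mp htImm).2.2
      rw [this]; exact Set.mem_insert _ _
    obtain ⟨y, hy⟩ := FPF.mem_dom.mp htdom
    have hyc : β b₀ = y := hvβ (htv.2 hy)
    have ht_eq : t = (p.1, p.2.extend b₀ (β b₀)) := by
      rw [hyc]; exact BBr.det hb₀ htImm hy
    have hsT : (p.1, p.2.extend b₀ (β b₀)) ∈ T := ht_eq ▸ htImm.1
    have hsv : (p.1, p.2.extend b₀ (β b₀)) ≤ v := ht_eq ▸ htv
    obtain ⟨m, hm⟩ := run_append [β b₀] n _ L₀ p hn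
    have hbex : ∃ b, BBr T p b := ⟨b₀, hb₀⟩
    have hbch : hbex.choose = b₀ := BBr.unique hbex.choose_spec hb₀
    have hstep : tstepT T α (p, [β b₀]) = ((p.1, p.2.extend b₀ (β b₀)), []) := by
      rw [tstepT_beta hna hbex, hbch]
    have htraj : (tstepT T α)^[m+1] ((FPF.empty A, FPF.empty A), L₀ ++ [β b₀]) =
        ((p.1, p.2.extend b₀ (β b₀)), []) := by
      rw [Function.iterate_succ_apply', hm, hstep]
    have hsα : agrees α (p.1, p.2.extend b₀ (β b₀)).1 := agrees_mono hpv.1 hvα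
    obtain ⟨n', p'', hrun, hT'', hle'', hv'', hα'', hna''⟩ :=
      climb_term hT hv hvα (nsize v - nsize (p.1, p.2.extend b₀ (β b₀)))
        _ [] hsT hsv hsα le_rfl
    have hfix'' : tstepT T α (p'', []) = (p'', []) :=
      tstepT_fix_of hna'' (fun _ => rfl)
    have htraj'' : (tstepT T α)^[n' + (m+1)]
        ((FPF.empty A, FPF.empty A), L₀ ++ [β b₀]) = (p'', []) := by
      rw [Function.iterate_add_apply, htraj]; exact hrun
    have hns1 : nsize (p.1, p.2.extend b₀ (β b₀)) = nsize p + 1 := by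
      show p.1.val.ncard + (p.2.extend b₀ (β b₀)).val.ncard = _
      rw [FPF.ncard_extend hb₀.1]
      unfold nsize; omega
    have hns2 : nsize (p.1, p.2.extend b₀ (β b₀)) ≤ nsize p'' := nsize_le hle''
    have hns3 : nsize p'' ≤ nsize v := nsize_le hv''
    have hnplt := nsize_lt hplt
    have hinv' : ∀ j (hj : j < (L₀ ++ [β b₀]).length), ∃ b,
        gammaF code q r T F α (code ((L₀ ++ [β b₀]).take j)) = code [q, b] ∧
        β b = (L₀ ++ [β b₀])[j] := by
      intro j hj
      rw [List.length_append, List.length_cons, List.length_nil] at hj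
      rcases Nat.lt_or_ge j L₀.length with hlt | hge
      · have htake : (L₀ ++ [β b₀]).take j = L₀.take j :=
          List.take_append_of_le_length (le_of_lt hlt)
        have hget : (L₀ ++ [β b₀])[j]'(by simpa using hj) = L₀[j]'hlt :=
          List.getElem_append_left hlt
        rw [htake, hget]
        exact hinv j hlt
      · have hj' : j = L₀.length := by omega
        subst hj'
        have htake : (L₀ ++ [β b₀]).take L₀.length = L₀ := List.take_left
        have hget : (L₀ ++ [β b₀])[L₀.length]'(by simpa using hj) = β b₀ :=
          List.getElem_concat_length rfl (by simpa using hj)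
        rw [htake, hget]
        refine ⟨b₀, ?_, rfl⟩
        have hstab : stab (tstepT T α) ((FPF.empty A, FPF.empty A), L₀) = (p, []) :=
          stab_of_fix hn hfix
        rw [gamma_eval hcode, hstab]
        unfold outT
        rw [if_pos rfl, dif_pos hbex, hbch]
    exact ih p'' (L₀ ++ [β b₀]) (n' + (m+1)) htraj'' hfix'' hT'' hv''
      (by omega) hinv'

end Statement6Aux

/-- For every total bisequential `G : A^A × A^A → A` there is
`φ_G ∈ A^A` such that `φ_G α` is always defined and `φ(φ_G α, β) = G(α,β)`. -/
theorem statement6 {A : Type u} [Infinite A] (code : List A → A)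
    (hcode : Function.Injective code) (q r : A) (hqr : q ≠ r)
    (G : (A → A) → (A → A) → A) (hG : BiSeqTotal G) :
    ∃ φG : A → A, ∀ α : A → A, ∃ γ : A → A,
      AppRel code (fun x => code [q, x]) (fun x => code [r, x]) φG α γ ∧
      ∀ β : A → A,
        phiRel code (fun x => code [q, x]) (fun x => code [r, x]) γ β (G α β) := by
  classical
  obtain ⟨T, F, hT, hTot⟩ := hG
  have hG' : ∀ (α' β' : A → A), ∃ v, IsLeaf T v ∧ agrees α' v.1 ∧ agrees β' v.2 :=
    fun α' β' => (hTot α' β').imp (fun v h => ⟨h.1, h.2.1, h.2.2.1⟩)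
  refine ⟨phiGF code q r T F, fun α => ⟨gammaF code q r T F α, ?_, ?_⟩⟩
  · -- AppRel
    intro a
    by_cases hadec : ∃ L, a = code L
    · obtain ⟨L, haL⟩ := hadec
      obtain ⟨n₀, hfix0⟩ := term_aux hT hG' α L (FPF.empty A, FPF.empty A)
        hT.1.1 (agrees_empty α)
      have hRfix : tstepT T α ((tstepT T α)^[n₀] ((FPF.empty A, FPF.empty A), L)) =
          (tstepT T α)^[n₀] ((FPF.empty A, FPF.empty A), L) :=
        (Function.iterate_succ_apply' (tstepT T α) n₀ _).symm.trans hfix0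
      rcases hEq : (tstepT T α)^[n₀] ((FPF.empty A, FPF.empty A), L) with ⟨pR, LR⟩
      rw [hEq] at hRfix
      have hstabT : stab (tstepT T α) ((FPF.empty A, FPF.empty A), L) = (pR, LR) :=
        stab_of_fix hEq hRfix
      have hfi := tstepT_fix_inv hRfix
      have hsim : (tstepW T)^[n₀]
          ((FPF.empty A, FPF.empty A), L, wlist T α n₀ ((FPF.empty A, FPF.empty A), L)) =
          (pR, LR, []) := by
        have := sim1 (T := T) α n₀ ((FPF.empty A, FPF.empty A), L)
        rw [hEq] at this
        exact this
      have hWfix : tstepW T (pR, LR, []) = (pR, LR, []) := tstepW_fix_of hfi.1 hfi.2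
      refine ⟨wlist T α n₀ ((FPF.empty A, FPF.empty A), L), ?_, ?_⟩
      · -- AInterrog
        intro j hj
        have hpre : (wlist T α n₀ ((FPF.empty A, FPF.empty A), L)).take j <+:
            wlist T α n₀ ((FPF.empty A, FPF.empty A), L) := List.take_prefix j _
        have hlen : ((wlist T α n₀ ((FPF.empty A, FPF.empty A), L)).take j).length = j := by
          rw [List.length_take]; omega
        have hne : (wlist T α n₀ ((FPF.empty A, FPF.empty A), L)).take j ≠
            wlist T α n₀ ((FPF.empty A, FPF.empty A), L) := by
          intro he; rw [he] at hlen; omega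
        obtain ⟨m, st, aa, h1, h2, h3, h4⟩ :=
          sim2 α n₀ ((FPF.empty A, FPF.empty A), L) _ hpre hne
        have hstabW : stab (tstepW T)
            ((FPF.empty A, FPF.empty A), L,
              (wlist T α n₀ ((FPF.empty A, FPF.empty A), L)).take j) = st :=
          stab_of_fix h1 h2
        have hAex : ∃ aa', ABr T st.1 aa' := ⟨aa, h3⟩
        refine ⟨aa, ?_, ?_⟩
        · rw [phiG_eval hcode q r T F a _ L haL, hstabW, dif_pos hAex,
            ABr.unique hAex.choose_spec h3]
        · have hj2 : j < ((wlist T α n₀ ((FPF.empty A, FPF.empty A), L)).take j ++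
              [α aa]).length := by
            rw [List.length_append, hlen]; simp
          have hval := h4.getElem hj2
          rw [← hval]
          have : ((wlist T α n₀ ((FPF.empty A, FPF.empty A), L)).take j ++
              [α aa])[j]'hj2 = α aa :=
            List.getElem_concat_length hlen.symm hj2
          rw [this]
      · -- final value
        have hstabW2 : stab (tstepW T)
            ((FPF.empty A, FPF.empty A), L,
              wlist T α n₀ ((FPF.empty A, FPF.empty A), L)) = (pR, LR, []) :=
          stab_of_fix hsim hWfix
        have hnA : ¬∃ aa, ABr T ((pR, LR, []) :
            (FPF A × FPF A) × List A × List A).1 aa := hfi.1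
        rw [phiG_eval hcode q r T F a _ L haL, hstabW2, dif_neg hnA]
        have hγ : gammaF code q r T F α a = outT T F code q r (pR, LR) := by
          rw [haL, gamma_eval hcode, hstabT]
        rw [hγ]
    · refine ⟨[], fun j hj => absurd hj (by simp), ?_⟩
      rw [phiG_eval_junk hcode [] hadec, gamma_eval_junk hadec]
  · -- phiRel
    intro β
    obtain ⟨v, hv, hvα, hvβ, hGv⟩ := hTot α β
    obtain ⟨n₁, p₀, hrun₀, hp₀T, _, hp₀v, hp₀α, hna₀⟩ :=
      climb_term hT hv hvα (nsize v - nsize (FPF.empty A, FPF.empty A))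
        (FPF.empty A, FPF.empty A) [] hT.1.1 (hT.1.2.1 v hv.1)
        (agrees_empty α) le_rfl
    have hfix₀ : tstepT T α (p₀, []) = (p₀, []) :=
      tstepT_fix_of hna₀ (fun _ => rfl)
    obtain ⟨L, hInt, hval⟩ := build hcode hT hv hvα hvβ
      (nsize v - nsize p₀) p₀ [] n₁ hrun₀ hfix₀ hp₀T hp₀v le_rfl
      (fun j hj => absurd hj (by simp))
    exact ⟨L, hInt, by rw [hGv]; exact hval⟩

end OostenK2
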